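/- Let q : ℝ → ℝⁿ be a C² curve satisfying the constraints and solving the Voronec equations. Then at every time t, d/dt[E*(q(t),v(t),t)] = −(∂L*/∂t)(q,v,t) + ∑_{ν=1}^k (ᾱ_ν − α_ν)(q,v,t)·(∂L*/∂q_{m+ν})(q,v,t) + ∑_{ν=1}^k B̄_ν(t)·(∂L/∂u_{m+ν})(q, û(q,v,t), t), where all functions are evaluated along the curve. -/

import Mathlib

open scoped BigOperators
noncomputable section
namespace NH

/-- The phase point `(q, v, t)` with `q : ℝⁿ` (n = m+k) and independent velocities `v : ℝᵐ`. -/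
abbrev Pt (m k : ℕ) : Type := (Fin (m+k) → ℝ) × (Fin m → ℝ) × ℝ

/-- The full phase point `(q, u, t)` with all velocities `u : ℝⁿ`. -/
abbrev PtL (m k : ℕ) : Type := (Fin (m+k) → ℝ) × (Fin (m+k) → ℝ) × ℝ

/-- Partial derivative of `f (q, w, t)` with respect to `q_i`. -/
def pq {n m' : ℕ} (f : (Fin n → ℝ) × (Fin m' → ℝ) × ℝ → ℝ) (i : Fin n)
    (x : (Fin n → ℝ) × (Fin m' → ℝ) × ℝ) : ℝ :=
  fderiv ℝ f x (Pi.single i 1, 0, 0)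

/-- Partial derivative of `f (q, w, t)` with respect to the velocity variable `w_j`. -/
def pv {n m' : ℕ} (f : (Fin n → ℝ) × (Fin m' → ℝ) × ℝ → ℝ) (j : Fin m')
    (x : (Fin n → ℝ) × (Fin m' → ℝ) × ℝ) : ℝ :=
  fderiv ℝ f x (0, Pi.single j 1, 0)

/-- Partial derivative of `f (q, w, t)` with respect to time `t`. -/
def pt {n m' : ℕ} (f : (Fin n → ℝ) × (Fin m' → ℝ) × ℝ → ℝ)
    (x : (Fin n → ℝ) × (Fin m' → ℝ) × ℝ) : ℝ :=
  fderiv ℝ f x (0, 0, 1)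

/-- Partial derivative of `U (q, t)` with respect to `q_i`. -/
def pUq {n : ℕ} (U : (Fin n → ℝ) × ℝ → ℝ) (i : Fin n) (x : (Fin n → ℝ) × ℝ) : ℝ :=
  fderiv ℝ U x (Pi.single i 1, 0)

/-- Partial derivative of `U (q, t)` with respect to `t`. -/
def pUt {n : ℕ} (U : (Fin n → ℝ) × ℝ → ℝ) (x : (Fin n → ℝ) × ℝ) : ℝ :=
  fderiv ℝ U x (0, 1)

variable {m k : ℕ}

/-- `û(q,v,t) = (v₁,…,vₘ, α₁(q,v,t),…,α_k(q,v,t))`. -/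
def uhat (α : Fin k → Pt m k → ℝ) (x : Pt m k) : Fin (m+k) → ℝ :=
  Fin.append x.2.1 (fun ν => α ν x)

/-- The full phase point `(q, û(q,v,t), t)` associated to `(q,v,t)`. -/
def Lpt (α : Fin k → Pt m k → ℝ) (x : Pt m k) : PtL m k :=
  (x.1, uhat α x, x.2.2)

/-- The restricted Lagrangian `L*(q,v,t) = L(q, û(q,v,t), t)`. -/
def Lstar (L : PtL m k → ℝ) (α : Fin k → Pt m k → ℝ) (x : Pt m k) : ℝ :=
  L (Lpt α x)

/-- `ᾱ_ν(q,v,t) = ∑_r v_r ∂α_ν/∂v_r`. -/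
def abar (α : Fin k → Pt m k → ℝ) (ν : Fin k) (x : Pt m k) : ℝ :=
  ∑ r : Fin m, x.2.1 r * pv (α ν) r x

/-- The restricted energy `E*(q,v,t) = ∑_r v_r ∂L*/∂v_r − L*`. -/
def Estar (L : PtL m k → ℝ) (α : Fin k → Pt m k → ℝ) (x : Pt m k) : ℝ :=
  ∑ r : Fin m, x.2.1 r * pv (Lstar L α) r x - Lstar L α x

/-- The energy `E(q,v,t) = ∑_i û_i (∂L/∂u_i)(q,û,t) − L*(q,v,t)`. -/
def En (L : PtL m k → ℝ) (α : Fin k → Pt m k → ℝ) (x : Pt m k) : ℝ :=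
  ∑ i : Fin (m+k), uhat α x i * pv L i (Lpt α x) - Lstar L α x

/-- `q̇_i(t)`. -/
def qdot {n : ℕ} (q : ℝ → Fin n → ℝ) (t : ℝ) (i : Fin n) : ℝ :=
  deriv (fun s => q s i) t

/-- The independent velocities `v(t) = (q̇₁,…,q̇ₘ)` along a curve. -/
def vel (m k : ℕ) (q : ℝ → Fin (m+k) → ℝ) (t : ℝ) (r : Fin m) : ℝ :=
  qdot q t (Fin.castAdd k r)

/-- The point `(q(t), v(t), t)` along a curve. -/
def along (m k : ℕ) (q : ℝ → Fin (m+k) → ℝ) (t : ℝ) : Pt m k :=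
  (q t, vel m k q t, t)

/-- The curve satisfies the nonholonomic constraints: `q̇_{m+ν} = α_ν(q, v, t)`. -/
def Constrained (α : Fin k → Pt m k → ℝ) (q : ℝ → Fin (m+k) → ℝ) : Prop :=
  ∀ (t : ℝ) (ν : Fin k), qdot q t (Fin.natAdd m ν) = α ν (along m k q t)

/-- The Voronec coefficients `B_rν(t)` along a constrained curve. -/
def Bco (α : Fin k → Pt m k → ℝ) (q : ℝ → Fin (m+k) → ℝ) (r : Fin m) (ν : Fin k) (t : ℝ) : ℝ :=
  deriv (fun s => pv (α ν) r (along m k q s)) t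
    - pq (α ν) (Fin.castAdd k r) (along m k q t)
    - ∑ μ : Fin k, pv (α μ) r (along m k q t) * pq (α ν) (Fin.natAdd m μ) (along m k q t)

/-- The Voronec equations of motion along a constrained curve. -/
def Voronec (L : PtL m k → ℝ) (α : Fin k → Pt m k → ℝ) (q : ℝ → Fin (m+k) → ℝ) : Prop :=
  ∀ (r : Fin m) (t : ℝ),
    deriv (fun s => pv (Lstar L α) r (along m k q s)) t
      - pq (Lstar L α) (Fin.castAdd k r) (along m k q t)
      - ∑ ν : Fin k, pq (Lstar L α) (Fin.natAdd m ν) (along m k q t) * pv (α ν) r (along m k q t)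
      - ∑ ν : Fin k, Bco α q r ν t * pv L (Fin.natAdd m ν) (Lpt α (along m k q t)) = 0

/-! ### Auxiliary lemmas -/

section AuxLemmas

lemma clm_decomp {n m' : ℕ} (φ : ((Fin n → ℝ) × (Fin m' → ℝ) × ℝ) →L[ℝ] ℝ)
    (a : Fin n → ℝ) (b : Fin m' → ℝ) (c : ℝ) :
    φ (a, b, c) = (∑ i, a i * φ (Pi.single i 1, 0, 0))
      + (∑ j, b j * φ (0, Pi.single j 1, 0)) + c * φ (0, 0, 1) := by
  have h : (a, b, c) = (∑ i, a i • ((Pi.single i 1 : Fin n → ℝ), (0 : Fin m' → ℝ), (0:ℝ)))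
      + (∑ j, b j • ((0 : Fin n → ℝ), (Pi.single j 1 : Fin m' → ℝ), (0:ℝ)))
      + c • ((0 : Fin n → ℝ), (0 : Fin m' → ℝ), (1:ℝ)) := by
    refine Prod.ext ?_ (Prod.ext ?_ ?_) <;>
      simp [Prod.fst_sum, Prod.snd_sum, ← Pi.single_smul, Finset.univ_sum_single]
  rw [h]
  simp only [map_add, map_sum, map_smul, smul_eq_mul]

lemma contDiff_pv2 {n m' : ℕ} {f : (Fin n → ℝ) × (Fin m' → ℝ) × ℝ → ℝ}
    (hf : ContDiff ℝ 2 f) (j : Fin m') : ContDiff ℝ 1 (pv f j) := by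
  have h : ContDiff ℝ 1 (fderiv ℝ f) := hf.fderiv_right (by norm_num)
  exact h.clm_apply contDiff_const

variable {m k : ℕ}

lemma contDiff_qi {q : ℝ → Fin (m+k) → ℝ} (hq : ContDiff ℝ 2 q) (i : Fin (m+k)) :
    ContDiff ℝ 2 (fun s => q s i) := (contDiff_pi.1 hq) i

lemma contDiff_veli {q : ℝ → Fin (m+k) → ℝ} (hq : ContDiff ℝ 2 q) (r : Fin m) :
    ContDiff ℝ 1 (fun s => vel m k q s r) := by
  have h := contDiff_qi hq (Fin.castAdd k r)
  rw [show (2 : WithTop ℕ∞) = 1 + 1 by norm_num, contDiff_succ_iff_deriv] at h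
  exact h.2.2

lemma contDiff_along {q : ℝ → Fin (m+k) → ℝ} (hq : ContDiff ℝ 2 q) :
    ContDiff ℝ 1 (along m k q) := by
  refine (hq.of_le (by norm_num)).prodMk (ContDiff.prodMk ?_ contDiff_id)
  exact contDiff_pi.2 fun r => contDiff_veli hq r

lemma hasDerivAt_along {q : ℝ → Fin (m+k) → ℝ} (hq : ContDiff ℝ 2 q) (t : ℝ) :
    HasDerivAt (along m k q)
      (qdot q t, (fun r => deriv (fun s => vel m k q s r) t), 1) t := by
  have h1 : HasDerivAt (fun s => q s) (qdot q t) t := by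
    rw [hasDerivAt_pi]
    intro i
    exact (((contDiff_qi hq i).differentiable (by norm_num)) t).hasDerivAt
  have h2 : HasDerivAt (fun s => vel m k q s)
      (fun r => deriv (fun s => vel m k q s r) t) t := by
    rw [hasDerivAt_pi]
    intro r
    exact (((contDiff_veli hq r).differentiable one_ne_zero) t).hasDerivAt
  exact h1.prodMk (h2.prodMk (hasDerivAt_id t))

lemma deriv_along_comp {q : ℝ → Fin (m+k) → ℝ} (hq : ContDiff ℝ 2 q)
    {f : Pt m k → ℝ} (t : ℝ) (hf : DifferentiableAt ℝ f (along m k q t)) :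
    deriv (fun s => f (along m k q s)) t
      = (∑ i, qdot q t i * pq f i (along m k q t))
        + (∑ r, deriv (fun s => vel m k q s r) t * pv f r (along m k q t))
        + pt f (along m k q t) := by
  have h := hf.hasFDerivAt.comp_hasDerivAt t (hasDerivAt_along hq t)
  rw [show (fun s => f (along m k q s)) = f ∘ along m k q from rfl, h.deriv]
  simp only [pq, pv, pt]
  rw [clm_decomp (fderiv ℝ f (along m k q t)) (qdot q t) (fun r => deriv (fun s => vel m k q s r) t) 1]
  ring

lemma contDiff_uhat {α : Fin k → Pt m k → ℝ} (hα : ∀ ν, ContDiff ℝ 2 (α ν)) :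
    ContDiff ℝ 2 (fun x : Pt m k => uhat α x) := by
  rw [contDiff_pi]
  intro i
  refine Fin.addCases (fun r => ?_) (fun ν => ?_) i
  · simp only [uhat, Fin.append_left]
    exact contDiff_pi.1 (contDiff_fst.comp contDiff_snd) r
  · simp only [uhat, Fin.append_right]
    exact hα ν

lemma contDiff_Lstar {L : PtL m k → ℝ} (hL : ContDiff ℝ 2 L)
    {α : Fin k → Pt m k → ℝ} (hα : ∀ ν, ContDiff ℝ 2 (α ν)) :
    ContDiff ℝ 2 (Lstar L α) := by
  have hLpt : ContDiff ℝ 2 (Lpt α) :=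
    contDiff_fst.prodMk ((contDiff_uhat hα).prodMk (contDiff_snd.comp contDiff_snd))
  exact hL.comp hLpt

end AuxLemmas
lemma final_algebra {m k : ℕ} (v vd G A : Fin m → ℝ) (Q P al : Fin k → ℝ)
    (B C : Fin m → Fin k → ℝ) (c : ℝ) :
    (∑ r, (vd r * G r + v r * (A r + (∑ ν, Q ν * C r ν) + ∑ ν, B r ν * P ν)))
      - ((∑ r, v r * A r) + (∑ ν, al ν * Q ν) + (∑ r, vd r * G r) + c)
    = -c + (∑ ν, ((∑ r, v r * C r ν) - al ν) * Q ν) + ∑ ν, (∑ r, B r ν * v r) * P ν := by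
  have h1 : ∑ r, ∑ ν, v r * (Q ν * C r ν) = ∑ ν, (∑ r, v r * C r ν) * Q ν := by
    rw [Finset.sum_comm]
    exact Finset.sum_congr rfl fun ν _ => by rw [Finset.sum_mul]; exact Finset.sum_congr rfl fun r _ => by ring
  have h2 : ∑ r, ∑ ν, v r * (B r ν * P ν) = ∑ ν, (∑ r, B r ν * v r) * P ν := by
    rw [Finset.sum_comm]
    exact Finset.sum_congr rfl fun ν _ => by rw [Finset.sum_mul]; exact Finset.sum_congr rfl fun r _ => by ring
  simp only [mul_add, Finset.mul_sum, Finset.sum_add_distrib, sub_mul, Finset.sum_sub_distrib, h1, h2]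
  ring
theorem energy_balance_Voronec (m k : ℕ) (hm : 0 < m) (hk : 0 < k)
    (L : PtL m k → ℝ) (hL : ContDiff ℝ 2 L)
    (α : Fin k → Pt m k → ℝ) (hα : ∀ ν, ContDiff ℝ 2 (α ν))
    (q : ℝ → Fin (m+k) → ℝ) (hq : ContDiff ℝ 2 q)
    (hcon : Constrained α q)
    (hV : Voronec L α q) :
    ∀ t : ℝ,
      deriv (fun s => Estar L α (along m k q s)) t
        = - pt (Lstar L α) (along m k q t)
          + ∑ ν : Fin k,
              (abar α ν (along m k q t) - α ν (along m k q t))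
                * pq (Lstar L α) (Fin.natAdd m ν) (along m k q t)
          + ∑ ν : Fin k,
              (∑ r : Fin m, Bco α q r ν t * vel m k q t r)
                * pv L (Fin.natAdd m ν) (Lpt α (along m k q t)) := by
  intro t
  have hLs : ContDiff ℝ 2 (Lstar L α) := contDiff_Lstar hL hα
  have halong : ContDiff ℝ 1 (along m k q) := contDiff_along hq
  have hLsA : DifferentiableAt ℝ (Lstar L α) (along m k q t) :=
    (hLs.differentiable (by norm_num)) _
  have hgC : ∀ r : Fin m,
      DifferentiableAt ℝ (fun s => pv (Lstar L α) r (along m k q s)) t :=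
    fun r => (((contDiff_pv2 hLs r).comp halong).differentiable one_ne_zero) t
  have hvC : ∀ r : Fin m, DifferentiableAt ℝ (fun s => vel m k q s r) t :=
    fun r => ((contDiff_veli hq r).differentiable one_ne_zero) t
  -- derivative of the sum part of E* along the curve
  have hsum : HasDerivAt
      (fun s => ∑ r : Fin m, vel m k q s r * pv (Lstar L α) r (along m k q s))
      (∑ r : Fin m, (deriv (fun s => vel m k q s r) t * pv (Lstar L α) r (along m k q t)
        + vel m k q t r * deriv (fun s => pv (Lstar L α) r (along m k q s)) t)) t := by
    refine HasDerivAt.fun_sum fun r _ => ?_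
    exact ((hvC r).hasDerivAt).mul ((hgC r).hasDerivAt)
  have hLal : HasDerivAt (fun s => Lstar L α (along m k q s))
      (deriv (fun s => Lstar L α (along m k q s)) t) t :=
    (hLsA.comp t ((halong.differentiable one_ne_zero) t)).hasDerivAt
  have hE : deriv (fun s => Estar L α (along m k q s)) t
      = (∑ r : Fin m, (deriv (fun s => vel m k q s r) t * pv (Lstar L α) r (along m k q t)
          + vel m k q t r * deriv (fun s => pv (Lstar L α) r (along m k q s)) t))
        - deriv (fun s => Lstar L α (along m k q s)) t := by
    have heq : (fun s => Estar L α (along m k q s))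
        = fun s => (∑ r : Fin m, vel m k q s r * pv (Lstar L α) r (along m k q s))
            - Lstar L α (along m k q s) := rfl
    rw [heq]
    exact (hsum.sub hLal).deriv
  -- chain rule for L* along the curve, with the q-sum split and constraints used
  have hD : deriv (fun s => Lstar L α (along m k q s)) t
      = ((∑ r : Fin m, vel m k q t r * pq (Lstar L α) (Fin.castAdd k r) (along m k q t))
          + (∑ ν : Fin k, α ν (along m k q t) * pq (Lstar L α) (Fin.natAdd m ν) (along m k q t))
          + (∑ r : Fin m, deriv (fun s => vel m k q s r) t * pv (Lstar L α) r (along m k q t))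
          + pt (Lstar L α) (along m k q t)) := by
    rw [deriv_along_comp hq t hLsA]
    rw [Fin.sum_univ_add (f := fun i => qdot q t i * pq (Lstar L α) i (along m k q t))]
    have h2 : (∑ ν : Fin k, qdot q t (Fin.natAdd m ν) * pq (Lstar L α) (Fin.natAdd m ν) (along m k q t))
        = ∑ ν : Fin k, α ν (along m k q t) * pq (Lstar L α) (Fin.natAdd m ν) (along m k q t) :=
      Finset.sum_congr rfl fun ν _ => by rw [hcon t ν]
    rw [h2]
    have h1 : (∑ r : Fin m, qdot q t (Fin.castAdd k r) * pq (Lstar L α) (Fin.castAdd k r) (along m k q t))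
        = ∑ r : Fin m, vel m k q t r * pq (Lstar L α) (Fin.castAdd k r) (along m k q t) := rfl
    rw [h1]
  -- Voronec equations rearranged
  have hVor : ∀ r : Fin m, deriv (fun s => pv (Lstar L α) r (along m k q s)) t
      = pq (Lstar L α) (Fin.castAdd k r) (along m k q t)
        + (∑ ν : Fin k, pq (Lstar L α) (Fin.natAdd m ν) (along m k q t) * pv (α ν) r (along m k q t))
        + ∑ ν : Fin k, Bco α q r ν t * pv L (Fin.natAdd m ν) (Lpt α (along m k q t)) := by
    intro r
    have h := hV r t
    linarith
  have habar : ∀ ν : Fin k, abar α ν (along m k q t)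
      = ∑ r : Fin m, vel m k q t r * pv (α ν) r (along m k q t) := fun ν => rfl
  rw [hE, hD]
  simp only [hVor, habar]
  exact final_algebra (fun r => vel m k q t r)
    (fun r => deriv (fun s => vel m k q s r) t)
    (fun r => pv (Lstar L α) r (along m k q t))
    (fun r => pq (Lstar L α) (Fin.castAdd k r) (along m k q t))
    (fun ν => pq (Lstar L α) (Fin.natAdd m ν) (along m k q t))
    (fun ν => pv L (Fin.natAdd m ν) (Lpt α (along m k q t)))
    (fun ν => α ν (along m k q t))
    (fun r ν => Bco α q r ν t)
    (fun r ν => pv (α ν) r (along m k q t))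
    (pt (Lstar L α) (along m k q t))

end NH
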